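/- Let T be a finite set of linear TGDs and ΣD, ΣQ schemas. Then T is ΣD,ΣQ-trivial if and only if chase_T(D) →_{ΣQ} D for all singleton ΣD-databases D, i.e., for all ΣD-databases containing at most one fact. -/

import Mathlib

set_option autoImplicit false

/-! ### Terms: constants from 𝐂 (coded `Term.const n`) and nulls from 𝐍 (coded `Term.null n`) -/

inductive Term : Type
  | const : ℕ → Term
  | null  : ℕ → Term
deriving DecidableEq

def Term.isConst : Term → Prop
  | .const _ => True
  | .null _  => False

def termEquiv : Term ≃ ℕ ⊕ ℕ where
  toFun t := match t with
    | .const n => Sum.inl n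
    | .null n  => Sum.inr n
  invFun x := match x with
    | Sum.inl n => .const n
    | Sum.inr n => .null n
  left_inv t := by cases t <;> rfl
  right_inv x := by cases x <;> rfl

instance : Primcodable Term := Primcodable.ofEquiv _ termEquiv

/-! ### Relation symbols (with arity) and schemas -/

structure RelSym : Type where
  name : ℕ
  arity : ℕ
deriving DecidableEq

def relSymEquiv : RelSym ≃ ℕ × ℕ where
  toFun r := (r.name, r.arity)
  invFun p := ⟨p.1, p.2⟩
  left_inv r := rfl
  right_inv p := rfl

instance : Primcodable RelSym := Primcodable.ofEquiv _ relSymEquiv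

/-- A schema is a set of relation symbols. -/
abbrev Schema := Set RelSym

/-! ### Facts, instances, databases -/

structure Fct : Type where
  rel : RelSym
  args : List Term
deriving DecidableEq

def fctEquiv : Fct ≃ RelSym × List Term where
  toFun f := (f.rel, f.args)
  invFun p := ⟨p.1, p.2⟩
  left_inv f := rfl
  right_inv p := rfl

instance : Primcodable Fct := Primcodable.ofEquiv _ fctEquiv

/-- A fact is well-formed if its argument tuple matches the arity of its relation symbol
(arities are ≥ 1). -/
def Fct.wf (f : Fct) : Prop := f.args.length = f.rel.arity ∧ 1 ≤ f.rel.arity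

/-- An instance is a (possibly infinite) set of facts. -/
abbrev Inst := Set Fct

/-- The active domain of an instance. -/
def adom (I : Inst) : Set Term := { t | ∃ f ∈ I, t ∈ f.args }

/-- A database: a finite instance of well-formed facts using only constants from 𝐂. -/
def IsDB (I : Inst) : Prop :=
  I.Finite ∧ ∀ f ∈ I, f.wf ∧ ∀ t ∈ f.args, t.isConst

/-- `I` is a Σ-instance. -/
def InstOver (I : Inst) (S : Schema) : Prop := ∀ f ∈ I, f.rel ∈ S ∧ f.wf

/-- `I` is a Σ-database. -/
def IsDatabase (I : Inst) (S : Schema) : Prop := IsDB I ∧ ∀ f ∈ I, f.rel ∈ S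

/-! ### Homomorphisms -/

def Fct.map (h : Term → Term) (f : Fct) : Fct := ⟨f.rel, f.args.map h⟩

/-- `h` is a Σ-homomorphism from `I` to `J`. -/
def IsHomOn (S : Schema) (h : Term → Term) (I J : Inst) : Prop :=
  ∀ f ∈ I, f.rel ∈ S → f.map h ∈ J

/-- `h` is a homomorphism from `I` to `J` (all relation symbols). -/
def IsFullHom (h : Term → Term) (I J : Inst) : Prop := ∀ f ∈ I, f.map h ∈ J

/-- `h` is database-preserving: it is the identity on all constants from 𝐂. -/
def DBPres (h : Term → Term) : Prop := ∀ n : ℕ, h (Term.const n) = Term.const n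

/-- `I →_Σ J`: there is a database-preserving Σ-homomorphism from `I` to `J`. -/
def HomTo (S : Schema) (I J : Inst) : Prop := ∃ h, DBPres h ∧ IsHomOn S h I J

/-- The induced subinstance of `I` on a set `A` of terms. -/
def restrict (I : Inst) (A : Set Term) : Inst := { f | f ∈ I ∧ ∀ t ∈ f.args, t ∈ A }

/-- `I →ⁿ_Σ J`: every induced subinstance of `I` with at most `n` active-domain elements
admits a database-preserving Σ-homomorphism to `J`. -/
def HomN (S : Schema) (n : ℕ) (I J : Inst) : Prop :=
  ∀ A : Set Term, A ⊆ adom I → A.Finite → A.ncard ≤ n → HomTo S (restrict I A) J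

/-- `I →^lim_Σ J`. -/
def HomLim (S : Schema) (I J : Inst) : Prop := ∀ n : ℕ, 1 ≤ n → HomN S n I J

/-- Homomorphic equivalence of instances. -/
def HomEquiv (I J : Inst) : Prop := (∃ h, IsFullHom h I J) ∧ (∃ h, IsFullHom h J I)

/-! ### Gaifman graph and connectedness -/

def coOccur (I : Inst) (a b : Term) : Prop := ∃ f ∈ I, a ∈ f.args ∧ b ∈ f.args

/-- The Gaifman graph of `I` is connected. -/
def Connected (I : Inst) : Prop :=
  ∀ a ∈ adom I, ∀ b ∈ adom I, Relation.ReflTransGen (coOccur I) a b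

/-- Restriction `I|_Σ` of `I` to the facts using a relation symbol from Σ. -/
def restrS (I : Inst) (S : Schema) : Inst := { f | f ∈ I ∧ f.rel ∈ S }

/-- `I` is Σ-connected. -/
def SConnected (S : Schema) (I : Inst) : Prop := Connected (restrS I S)

/-- `C` is a maximally Σ-connected component of `I`. -/
def MaxConnComp (S : Schema) (I C : Inst) : Prop :=
  C ⊆ restrS I S ∧ Connected C ∧
    ∀ C', C ⊆ C' → C' ⊆ restrS I S → Connected C' → C' = C

/-! ### Conjunctive queries -/

structure Atom : Type where
  rel : RelSym
  args : List ℕ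
deriving DecidableEq

def atomEquiv : Atom ≃ RelSym × List ℕ where
  toFun a := (a.rel, a.args)
  invFun p := ⟨p.1, p.2⟩
  left_inv a := rfl
  right_inv p := rfl

instance : Primcodable Atom := Primcodable.ofEquiv _ atomEquiv

def Atom.wf (a : Atom) : Prop := a.args.length = a.rel.arity ∧ 1 ≤ a.rel.arity

/-- Instantiate an atom by an assignment of terms to variables. -/
def Atom.inst (h : ℕ → Term) (a : Atom) : Fct := ⟨a.rel, a.args.map h⟩

/-- A conjunctive query: a finite set of relational atoms (as a list) together with a
tuple of answer variables. -/
structure CQ : Type where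
  atoms : List Atom
  ans : List ℕ
deriving DecidableEq

def cqEquiv : CQ ≃ List Atom × List ℕ where
  toFun q := (q.atoms, q.ans)
  invFun p := ⟨p.1, p.2⟩
  left_inv q := rfl
  right_inv p := rfl

instance : Primcodable CQ := Primcodable.ofEquiv _ cqEquiv

/-- `q` is a CQ over schema Σ. -/
def CQ.Over (q : CQ) (S : Schema) : Prop := ∀ a ∈ q.atoms, a.rel ∈ S ∧ a.wf

/-- A homomorphism from `q` to `I`. -/
def CQHom (q : CQ) (I : Inst) (h : ℕ → Term) : Prop := ∀ a ∈ q.atoms, a.inst h ∈ I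

/-- `c̄` is an answer to `q` on `I`. -/
def IsAnswer (q : CQ) (I : Inst) (c : List Term) : Prop :=
  (∀ x ∈ c, x ∈ adom I) ∧ ∃ h, CQHom q I h ∧ q.ans.map h = c

/-- The canonical database of a CQ (variables viewed as constants/nulls). -/
def canonDB (q : CQ) : Inst := { f | ∃ a ∈ q.atoms, f = a.inst Term.null }

/-! ### Tuple-generating dependencies -/

/-- A TGD `∀x̄∀ȳ (φ(x̄,ȳ) → ∃z̄ ψ(x̄,z̄))`, with `frontier` the tuple `x̄` of
frontier variables. -/
structure TGD : Type where
  body : List Atom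
  head : List Atom
  frontier : List ℕ
deriving DecidableEq

def tgdEquiv : TGD ≃ List Atom × List Atom × List ℕ where
  toFun t := (t.body, t.head, t.frontier)
  invFun p := ⟨p.1, p.2.1, p.2.2⟩
  left_inv t := rfl
  right_inv p := rfl

instance : Primcodable TGD := Primcodable.ofEquiv _ tgdEquiv

def TGD.bodyVars (t : TGD) : Set ℕ := { x | ∃ a ∈ t.body, x ∈ a.args }
def TGD.headVars (t : TGD) : Set ℕ := { x | ∃ a ∈ t.head, x ∈ a.args }

/-- Well-formedness of a TGD: atoms are well-formed, the frontier variables are distinct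
body variables, and every variable shared by body and head is a frontier variable. -/
def TGD.wf (t : TGD) : Prop :=
  (∀ a ∈ t.body, a.wf) ∧ (∀ a ∈ t.head, a.wf) ∧ t.frontier.Nodup ∧
  (∀ x ∈ t.frontier, x ∈ t.bodyVars) ∧
  (∀ x, x ∈ t.bodyVars → x ∈ t.headVars → x ∈ t.frontier)

/-- A TGD is linear if its body contains at most one atom. -/
def TGD.Linear (t : TGD) : Prop := t.body.length ≤ 1

/-- A TGD is guarded if some body atom contains all body variables. -/
def TGD.Guarded (t : TGD) : Prop := ∃ a ∈ t.body, ∀ x, x ∈ t.bodyVars → x ∈ a.args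

/-- A TGD is frontier-one if it has exactly one frontier variable. -/
def TGD.FrontierOne (t : TGD) : Prop := t.frontier.length = 1

/-- `I ⊨ ϑ`. -/
def TGD.Satisfies (I : Inst) (t : TGD) : Prop :=
  ∀ g : ℕ → Term, (∀ a ∈ t.body, a.inst g ∈ I) →
    ∃ h : ℕ → Term, (∀ a ∈ t.head, a.inst h ∈ I) ∧ ∀ x ∈ t.frontier, h x = g x

/-- `I` is a model of the set `T` of TGDs. -/
def IsModel (I : Inst) (T : List TGD) : Prop := ∀ t ∈ T, TGD.Satisfies I t

/-- Number of (distinct) variables in the body of a TGD. -/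
def TGD.bodyVarList (t : TGD) : List ℕ := ((t.body.map Atom.args).flatten).dedup

/-- The body width of a set of TGDs. -/
def bodyWidth (T : List TGD) : ℕ := (T.map (fun t => t.bodyVarList.length)).foldr max 0

/-! ### The chase -/

/-- `ϑ` is applicable at tuple `c̄` in `I`. -/
def TGD.Applicable (t : TGD) (I : Inst) (c : List Term) : Prop :=
  (∃ g : ℕ → Term, (∀ a ∈ t.body, a.inst g ∈ I) ∧ t.frontier.map g = c) ∧
  ¬ (∃ h : ℕ → Term, (∀ a ∈ t.head, a.inst h ∈ I) ∧ t.frontier.map h = c)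

/-- `J` is the result of applying `ϑ` in `I` at `c̄`: the head is added, with the
existential variables replaced by distinct fresh nulls. -/
def TGD.StepResult (t : TGD) (I : Inst) (c : List Term) (J : Inst) : Prop :=
  ∃ h : ℕ → Term,
    t.frontier.map h = c ∧
    (∀ x, x ∈ t.headVars → x ∉ t.frontier → (¬ (h x).isConst ∧ h x ∉ adom I)) ∧
    (∀ x y, x ∈ t.headVars → y ∈ t.headVars → x ∉ t.frontier → y ∉ t.frontier →
      h x = h y → x = y) ∧
    J = I ∪ { f | ∃ a ∈ t.head, f = a.inst h }

/-- A chase step from `I` to `J` with some TGD of `T`. -/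
def ChaseStep (T : List TGD) (I J : Inst) : Prop :=
  ∃ t ∈ T, ∃ c, t.Applicable I c ∧ t.StepResult I c J

/-- A chase sequence for `I` with `T` (stalling when no TGD is applicable). -/
def IsChaseSeq (T : List TGD) (I : Inst) (f : ℕ → Inst) : Prop :=
  f 0 = I ∧ ∀ i, ChaseStep T (f i) (f (i+1)) ∨ ((¬ ∃ J, ChaseStep T (f i) J) ∧ f (i+1) = f i)

/-- Fairness: every applicable TGD application is eventually performed or becomes
non-applicable. -/
def IsFair (T : List TGD) (f : ℕ → Inst) : Prop :=
  ∀ i, ∀ t ∈ T, ∀ c, TGD.Applicable t (f i) c →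
    ∃ j, i ≤ j ∧
      ((TGD.Applicable t (f j) c ∧ TGD.StepResult t (f j) c (f (j+1))) ∨
        ¬ TGD.Applicable t (f j) c)

/-- `J` is the result of some fair chase sequence for `I` with `T`. -/
def IsChaseResult (T : List TGD) (I J : Inst) : Prop :=
  ∃ f : ℕ → Inst, IsChaseSeq T I f ∧ IsFair T f ∧ J = ⋃ i, f i

/-- `chase T I`: the result of an arbitrary but fixed fair chase sequence for `I` with `T`. -/
noncomputable def chase (T : List TGD) (I : Inst) : Inst :=
  @dite _ (∃ J, IsChaseResult T I J) (Classical.dec _) (fun h => h.choose) (fun _ => I)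

/-! ### Query answering w.r.t. TGDs and conservativity notions -/

/-- `c̄ ∈ q_T(D)`: `c̄` is a tuple over `adom D` and an answer to `q` on `chase T D`. -/
def AnswerWrt (q : CQ) (T : List TGD) (D : Inst) (c : List Term) : Prop :=
  (∀ x ∈ c, x ∈ adom D) ∧ ∃ h, CQHom q (chase T D) h ∧ q.ans.map h = c

/-- `T2` is `ΣD,ΣQ`-hom-conservative over `T1`. -/
def HomConservative (T1 T2 : List TGD) (SD SQ : Schema) : Prop :=
  ∀ D, IsDatabase D SD → HomTo SQ (chase T2 D) (chase T1 D)

/-- `T2` is `ΣD,ΣQ`-CQ-conservative over `T1`. -/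
def CQConservative (T1 T2 : List TGD) (SD SQ : Schema) : Prop :=
  ∀ D, IsDatabase D SD → ∀ q : CQ, CQ.Over q SQ →
    ∀ c, AnswerWrt q T2 D c → AnswerWrt q T1 D c

/-- `T` is `ΣD,ΣQ`-hom-trivial. -/
def HomTrivial (T : List TGD) (SD SQ : Schema) : Prop :=
  ∀ D, IsDatabase D SD → HomTo SQ (chase T D) D

/-- `T` is `ΣD,ΣQ`-CQ-trivial. -/
def CQTrivial (T : List TGD) (SD SQ : Schema) : Prop :=
  ∀ D, IsDatabase D SD → ∀ q : CQ, CQ.Over q SQ →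
    ∀ c, AnswerWrt q T D c → IsAnswer q D c

/-! ### Auxiliary machinery for the proof -/

section AuxChase
open Classical

lemma Fct.map_map' (f : Fct) (g h : Term → Term) : (f.map g).map h = f.map (h ∘ g) := by
  simp [Fct.map, List.map_map]

lemma Atom.inst_map (a : Atom) (g : ℕ → Term) (h : Term → Term) :
    (a.inst g).map h = a.inst (h ∘ g) := by
  simp [Atom.inst, Fct.map, List.map_map]

lemma Fct.map_rel (f : Fct) (h : Term → Term) : (f.map h).rel = f.rel := rfl

lemma Fct.map_id' (f : Fct) : f.map id = f := by
  simp [Fct.map]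

lemma adom_mono {I J : Inst} (hIJ : I ⊆ J) : adom I ⊆ adom J := by
  rintro t ⟨f, hf, ht⟩; exact ⟨f, hIJ hf, ht⟩

lemma adom_finite {I : Inst} (h : I.Finite) : (adom I).Finite := by
  have : adom I = ⋃ f ∈ I, {t | t ∈ f.args} := by
    ext t; simp [adom]
  rw [this]
  exact Set.Finite.biUnion h (fun f _ => f.args.finite_toSet)

lemma term_null_injective : Function.Injective Term.null := by
  intro a b h; cases h; rfl

lemma exists_fresh {I : Inst} (hI : I.Finite) :
    ∃ N : ℕ, ∀ m, N ≤ m → Term.null m ∉ adom I := by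
  have hf : ({m : ℕ | Term.null m ∈ adom I}).Finite := by
    have : {m : ℕ | Term.null m ∈ adom I} = Term.null ⁻¹' (adom I) := rfl
    rw [this]
    exact Set.Finite.preimage (Set.injOn_of_injective term_null_injective) (adom_finite hI)
  obtain ⟨N, hN⟩ := hf.bddAbove
  refine ⟨N + 1, fun m hm hmem => ?_⟩
  have := hN hmem
  omega

lemma mem_adom_of_arg {I : Inst} {F : Fct} (hF : F ∈ I) {u : Term} (hu : u ∈ F.args) :
    u ∈ adom I := ⟨F, hF, hu⟩

/-- A new-facts set added in a chase step is finite. -/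
lemma headSet_finite (t : TGD) (h : ℕ → Term) :
    ({f : Fct | ∃ a ∈ t.head, f = a.inst h}).Finite := by
  have : {f : Fct | ∃ a ∈ t.head, f = a.inst h} = (fun a => a.inst h) '' {a | a ∈ t.head} := by
    ext f; simp [eq_comm, Set.mem_image]
  rw [this]
  exact Set.Finite.image _ t.head.finite_toSet

lemma stepResult_subset {t : TGD} {I : Inst} {c : List Term} {J : Inst}
    (h : t.StepResult I c J) : I ⊆ J := by
  obtain ⟨h, -, -, -, rfl⟩ := h
  exact Set.subset_union_left

lemma stepResult_finite {t : TGD} {I : Inst} {c : List Term} {J : Inst}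
    (hI : I.Finite) (h : t.StepResult I c J) : J.Finite := by
  obtain ⟨h, -, -, -, rfl⟩ := h
  exact hI.union (headSet_finite t h)

lemma chaseStep_subset {T : List TGD} {I J : Inst} (h : ChaseStep T I J) : I ⊆ J := by
  obtain ⟨t, -, c, -, hs⟩ := h; exact stepResult_subset hs

lemma chaseStep_finite {T : List TGD} {I J : Inst} (hI : I.Finite) (h : ChaseStep T I J) :
    J.Finite := by
  obtain ⟨t, -, c, -, hs⟩ := h; exact stepResult_finite hI hs

lemma chaseSeq_mono {T : List TGD} {I : Inst} {f : ℕ → Inst} (hf : IsChaseSeq T I f) :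
    ∀ i j, i ≤ j → f i ⊆ f j := by
  intro i j hij
  induction j, hij using Nat.le_induction with
  | base => exact subset_rfl
  | succ n hn ih =>
    refine ih.trans ?_
    rcases hf.2 n with h | ⟨-, h⟩
    · exact chaseStep_subset h
    · rw [h]

/-- If a TGD is applicable in a finite instance, a step result exists. -/
lemma step_exists {t : TGD} {I : Inst} {c : List Term} (hI : I.Finite)
    (happ : t.Applicable I c) : ∃ J, t.StepResult I c J := by
  obtain ⟨⟨g, hg, hgc⟩, -⟩ := happ
  obtain ⟨N, hN⟩ := exists_fresh hI
  refine ⟨_, fun x => if x ∈ t.frontier then g x else Term.null (N + x), ?_, ?_, ?_, rfl⟩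
  · rw [← hgc]
    exact List.map_congr_left (fun x hx => by simp [hx])
  · intro x _ hxf
    constructor
    · simp [hxf, Term.isConst]
    · simp only [hxf, if_false]
      exact hN _ (Nat.le_add_right N x)
  · intro x y _ _ hxf hyf hxy
    simp only [hxf, hyf, if_false] at hxy
    have := term_null_injective hxy
    omega

/-! #### Construction of a fair chase sequence for finite instances -/

/-- The next instance in the canonical fair chase sequence. -/
noncomputable def nextInst (T : List TGD) (i : ℕ) (I : Inst) : Inst := by
  classical
  exact
    if h1 : ∃ p : TGD × List Term, Encodable.decode (α := TGD × List Term) (Nat.unpair i).1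
        = some p ∧ p.1 ∈ T ∧ p.1.Applicable I p.2 ∧ ∃ J, p.1.StepResult I p.2 J then
      h1.choose_spec.2.2.2.choose
    else if h2 : ∃ J, ChaseStep T I J then h2.choose
    else I

/-- The canonical chase sequence. -/
noncomputable def chaseSeqF (T : List TGD) (I : Inst) : ℕ → Inst
  | 0 => I
  | (i + 1) => nextInst T i (chaseSeqF T I i)

lemma nextInst_spec (T : List TGD) (i : ℕ) (I : Inst) :
    ChaseStep T I (nextInst T i I) ∨ ((¬ ∃ J, ChaseStep T I J) ∧ nextInst T i I = I) := by
  classical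
  rw [nextInst]
  split_ifs with h1 h2
  · obtain ⟨hdec, hT, happ, hJ⟩ := h1.choose_spec
    exact Or.inl ⟨h1.choose.1, hT, h1.choose.2, happ, hJ.choose_spec⟩
  · exact Or.inl h2.choose_spec
  · exact Or.inr ⟨h2, rfl⟩

lemma chaseSeqF_isChaseSeq (T : List TGD) (I : Inst) : IsChaseSeq T I (chaseSeqF T I) :=
  ⟨rfl, fun i => nextInst_spec T i (chaseSeqF T I i)⟩

lemma chaseSeqF_finite (T : List TGD) {I : Inst} (hI : I.Finite) (i : ℕ) :
    (chaseSeqF T I i).Finite := by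
  induction i with
  | zero => exact hI
  | succ n ih =>
    rcases nextInst_spec T n (chaseSeqF T I n) with h | ⟨-, h⟩
    · exact chaseStep_finite ih h
    · rw [chaseSeqF, h]; exact ih

lemma nextInst_of_applicable {T : List TGD} {I : Inst} (hI : I.Finite) {t : TGD} (hT : t ∈ T)
    {c : List Term} {i : ℕ} (hdec : Encodable.decode (α := TGD × List Term) (Nat.unpair i).1
      = some (t, c)) (happ : t.Applicable I c) :
    t.StepResult I c (nextInst T i I) := by
  classical
  have h1 : ∃ p : TGD × List Term, Encodable.decode (α := TGD × List Term) (Nat.unpair i).1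
      = some p ∧ p.1 ∈ T ∧ p.1.Applicable I p.2 ∧ ∃ J, p.1.StepResult I p.2 J :=
    ⟨(t, c), hdec, hT, happ, step_exists hI happ⟩
  rw [nextInst, dif_pos h1]
  have hp := h1.choose_spec
  have heq : h1.choose = (t, c) := Option.some.inj (hp.1.symm.trans hdec)
  rw [show t = h1.choose.1 from by rw [heq], show c = h1.choose.2 from by rw [heq]]
  exact hp.2.2.2.choose_spec

lemma chaseSeqF_fair (T : List TGD) {I : Inst} (hI : I.Finite) : IsFair T (chaseSeqF T I) := by
  classical
  intro i t hT c happ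
  set n := Encodable.encode (t, c) with hn
  refine ⟨Nat.pair n i, Nat.right_le_pair n i, ?_⟩
  by_cases happj : t.Applicable (chaseSeqF T I (Nat.pair n i)) c
  · left
    refine ⟨happj, ?_⟩
    have hdec : Encodable.decode (α := TGD × List Term) (Nat.unpair (Nat.pair n i)).1
        = some (t, c) := by
      rw [Nat.unpair_pair]
      exact Encodable.encodek _
    have := nextInst_of_applicable (chaseSeqF_finite T hI _) hT hdec happj
    exact this
  · exact Or.inr happj

lemma chase_result_exists (T : List TGD) {I : Inst} (hI : I.Finite) :
    ∃ J, IsChaseResult T I J :=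
  ⟨⋃ i, chaseSeqF T I i, chaseSeqF T I, chaseSeqF_isChaseSeq T I, chaseSeqF_fair T hI, rfl⟩

lemma chase_isResult {T : List TGD} {I : Inst} (h : ∃ J, IsChaseResult T I J) :
    IsChaseResult T I (chase T I) := by
  rw [chase, dif_pos h]
  exact h.choose_spec

lemma subset_chase (T : List TGD) (I : Inst) : I ⊆ chase T I := by
  by_cases h : ∃ J, IsChaseResult T I J
  · obtain ⟨f, hf, -, hJ⟩ := chase_isResult h
    rw [hJ, ← hf.1]
    exact Set.subset_iUnion f 0
  · rw [chase, dif_neg h]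

/-! #### Fair chase results are models -/

lemma map_eq_pointwise {l : List ℕ} {h g : ℕ → Term} (he : l.map h = l.map g) :
    ∀ x ∈ l, h x = g x :=
  List.map_inj_left.mp he

lemma exists_stage {f : ℕ → Inst} (mono : ∀ i j, i ≤ j → f i ⊆ f j) (l : List Atom)
    (g : ℕ → Term) (h : ∀ a ∈ l, a.inst g ∈ ⋃ i, f i) :
    ∃ i, ∀ a ∈ l, a.inst g ∈ f i := by
  induction l with
  | nil => exact ⟨0, by simp⟩
  | cons a l ih =>
    obtain ⟨i, hi⟩ := ih (fun b hb => h b (List.mem_cons_of_mem a hb))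
    obtain ⟨j, hj⟩ := Set.mem_iUnion.mp (h a (List.mem_cons_self))
    refine ⟨max i j, fun b hb => ?_⟩
    rcases List.mem_cons.mp hb with rfl | hb
    · exact mono j (max i j) (le_max_right i j) hj
    · exact mono i (max i j) (le_max_left i j) (hi b hb)

lemma not_applicable_head {t : TGD} {I : Inst} {g : ℕ → Term}
    (hg : ∀ a ∈ t.body, a.inst g ∈ I)
    (hna : ¬ t.Applicable I (t.frontier.map g)) :
    ∃ h : ℕ → Term, (∀ a ∈ t.head, a.inst h ∈ I) ∧ ∀ x ∈ t.frontier, h x = g x := by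
  rw [TGD.Applicable, not_and, not_not] at hna
  obtain ⟨h, hh, hc⟩ := hna ⟨g, hg, rfl⟩
  exact ⟨h, hh, map_eq_pointwise hc⟩

lemma chaseResult_model {T : List TGD} {I J : Inst} (h : IsChaseResult T I J) :
    IsModel J T := by
  obtain ⟨f, hseq, hfair, rfl⟩ := h
  have mono := chaseSeq_mono hseq
  intro t ht g hg
  obtain ⟨i, hi⟩ := exists_stage mono t.body g hg
  by_cases happ : t.Applicable (f i) (t.frontier.map g)
  · obtain ⟨j, hij, hj⟩ := hfair i t ht (t.frontier.map g) happ
    rcases hj with ⟨-, hstep⟩ | hna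
    · obtain ⟨h, hmapeq, -, -, hJeq⟩ := hstep
      refine ⟨h, fun a ha => ?_, map_eq_pointwise hmapeq⟩
      have : a.inst h ∈ f (j + 1) := by
        rw [hJeq]; exact Or.inr ⟨a, ha, rfl⟩
      exact Set.mem_iUnion.mpr ⟨j + 1, this⟩
    · obtain ⟨h, hh, hc⟩ := not_applicable_head (fun a ha => mono i j hij (hi a ha)) hna
      exact ⟨h, fun a ha => Set.mem_iUnion.mpr ⟨j, hh a ha⟩, hc⟩
  · obtain ⟨h, hh, hc⟩ := not_applicable_head hi happ
    exact ⟨h, fun a ha => Set.mem_iUnion.mpr ⟨i, hh a ha⟩, hc⟩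

/-! #### Universality of the chase -/

lemma chase_universal {T : List TGD} {I M : Inst} {f : ℕ → Inst}
    (hwf : ∀ t ∈ T, t.wf) (hseq : IsChaseSeq T I f) (hIM : I ⊆ M) (hM : IsModel M T) :
    ∃ H : Term → Term, DBPres H ∧ IsFullHom H (⋃ i, f i) M := by
  classical
  have inv0 : DBPres (id : Term → Term) ∧ IsFullHom id I M :=
    ⟨fun n => rfl, fun F hF => by rw [Fct.map_id']; exact hIM hF⟩
  have stepEx : ∀ i (h : Term → Term), DBPres h ∧ IsFullHom h (f i) M →
      ∃ h', (DBPres h' ∧ IsFullHom h' (f (i + 1)) M) ∧ ∀ u ∈ adom (f i), h' u = h u := by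
    rintro i h ⟨hdb, hhom⟩
    rcases hseq.2 i with hcs | ⟨-, heq⟩
    swap
    · exact ⟨h, ⟨hdb, by rw [heq]; exact hhom⟩, fun u _ => rfl⟩
    obtain ⟨t, htT, c, ⟨⟨g, hg, hgc⟩, -⟩, hs, hsc, hfresh, hinj, hJ⟩ := hcs
    have hbody : ∀ a ∈ t.body, a.inst (h ∘ g) ∈ M := fun a ha => by
      rw [← Atom.inst_map]; exact hhom _ (hg a ha)
    obtain ⟨h', hhead', hfr'⟩ := hM t htT (h ∘ g) hbody
    set P : Term → Prop := fun u => ∃ x, x ∈ t.headVars ∧ x ∉ t.frontier ∧ hs x = u with hP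
    set h2 : Term → Term := fun u => if hu : P u then h' hu.choose else h u with hh2
    have hagree : ∀ u ∈ adom (f i), h2 u = h u := by
      intro u hu
      have hnp : ¬ P u := by
        rintro ⟨x, hx1, hx2, rfl⟩
        exact (hfresh x hx1 hx2).2 hu
      simp only [hh2, dif_neg hnp]
    have hdb2 : DBPres h2 := by
      intro n
      have hnp : ¬ P (Term.const n) := by
        rintro ⟨x, hx1, hx2, hx3⟩
        have hic := (hfresh x hx1 hx2).1
        rw [hx3] at hic
        exact hic trivial
      simp only [hh2, dif_neg hnp]
      exact hdb n
    have hkey : ∀ x ∈ t.headVars, h2 (hs x) = h' x := by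
      intro x hx
      by_cases hxf : x ∈ t.frontier
      · have h1 : hs x = g x := map_eq_pointwise (hsc.trans hgc.symm) x hxf
        have hxb : x ∈ t.bodyVars := (hwf t htT).2.2.2.1 x hxf
        obtain ⟨a, ha, hxa⟩ := hxb
        have hmem : g x ∈ adom (f i) := by
          refine mem_adom_of_arg (hg a ha) ?_
          simp only [Atom.inst]
          exact List.mem_map.mpr ⟨x, hxa, rfl⟩
        rw [h1, hagree _ hmem, hfr' x hxf]
        rfl
      · have hu : P (hs x) := ⟨x, hx, hxf, rfl⟩
        have hch : hu.choose = x := by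
          obtain ⟨hy1, hy2, hy3⟩ := hu.choose_spec
          exact hinj _ x hy1 hx hy2 hxf hy3
        simp only [hh2, dif_pos hu, hch]
    have hhom2 : IsFullHom h2 (f (i + 1)) M := by
      intro F hF
      rw [hJ] at hF
      rcases hF with hF | ⟨a, ha, rfl⟩
      · have heqm : F.map h2 = F.map h := by
          simp only [Fct.map, Fct.mk.injEq, true_and]
          exact List.map_congr_left (fun u hu => hagree u (mem_adom_of_arg hF hu))
        rw [heqm]; exact hhom F hF
      · rw [Atom.inst_map]
        have heqm : a.inst (h2 ∘ hs) = a.inst h' := by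
          simp only [Atom.inst, Fct.mk.injEq, true_and]
          exact List.map_congr_left (fun x hx => hkey x ⟨a, ha, hx⟩)
        rw [heqm]; exact hhead' a ha
    exact ⟨h2, ⟨hdb2, hhom2⟩, hagree⟩
  -- build the chain of homomorphisms
  let S : (i : ℕ) → {h : Term → Term // DBPres h ∧ IsFullHom h (f i) M} := fun i =>
    Nat.rec ⟨id, by rw [hseq.1]; exact inv0⟩
      (fun n p => ⟨(stepEx n p.1 p.2).choose, (stepEx n p.1 p.2).choose_spec.1⟩) i
  have hS : ∀ i, ∀ u ∈ adom (f i), (S (i + 1)).1 u = (S i).1 u :=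
    fun i => (stepEx i (S i).1 (S i).2).choose_spec.2
  have hagreeLe : ∀ i j, i ≤ j → ∀ u ∈ adom (f i), (S j).1 u = (S i).1 u := by
    intro i j hij
    induction j, hij using Nat.le_induction with
    | base => intro u _; rfl
    | succ n hn ih =>
      intro u hu
      rw [hS n u (adom_mono (chaseSeq_mono hseq i n hn) hu), ih u hu]
  refine ⟨fun u => if hu : ∃ i, u ∈ adom (f i) then (S (Nat.find hu)).1 u else u, ?_, ?_⟩
  · intro n
    by_cases hu : ∃ i, Term.const n ∈ adom (f i)
    · simp only [dif_pos hu]; exact (S _).2.1 n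
    · simp only [dif_neg hu]
  · intro F hF
    obtain ⟨i, hFi⟩ := Set.mem_iUnion.mp hF
    have heqm : F.map (fun u => if hu : ∃ i, u ∈ adom (f i) then (S (Nat.find hu)).1 u else u)
        = F.map (S i).1 := by
      simp only [Fct.map, Fct.mk.injEq, true_and]
      apply List.map_congr_left
      intro u hu
      have hmem : u ∈ adom (f i) := mem_adom_of_arg hFi hu
      have hex : ∃ i, u ∈ adom (f i) := ⟨i, hmem⟩
      simp only [dif_pos hex]
      exact (hagreeLe _ i (Nat.find_min' hex hmem) u (Nat.find_spec hex)).symm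
    rw [heqm]
    exact (S i).2.2 F hFi

/-! #### Images of models under injective renamings, and unions of models -/

def mapInst (ρ : Term → Term) (I : Inst) : Inst := (Fct.map ρ) '' I

lemma satisfies_mapInst {ρ σ : Term → Term} (hσρ : ∀ u, σ (ρ u) = u) {M : Inst} {t : TGD}
    (hwf : t.wf) (hM : t.Satisfies M) : t.Satisfies (mapInst ρ M) := by
  intro g hg
  have hbody : ∀ a ∈ t.body, a.inst (σ ∘ g) ∈ M := by
    intro a ha
    obtain ⟨F, hF, hFeq⟩ := hg a ha
    have hrel : F.rel = a.rel := congrArg Fct.rel hFeq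
    have hargs : F.args.map ρ = a.args.map g := congrArg Fct.args hFeq
    have hFargs : F.args = a.args.map (σ ∘ g) := by
      have h1 : F.args = (F.args.map ρ).map σ := by
        rw [List.map_map]
        symm
        rw [show σ ∘ ρ = id from funext hσρ, List.map_id]
      rw [h1, hargs, List.map_map]
    have : F = a.inst (σ ∘ g) := by
      cases F
      simp only [Atom.inst, Fct.mk.injEq]
      exact ⟨hrel, hFargs⟩
    rw [← this]
    exact hF
  obtain ⟨h, hh, hc⟩ := hM (σ ∘ g) hbody
  refine ⟨ρ ∘ h, fun a ha => ⟨a.inst h, hh a ha, Atom.inst_map a h ρ⟩, ?_⟩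
  intro x hx
  have h1 : h x = σ (g x) := hc x hx
  obtain ⟨a, ha, hxa⟩ := hwf.2.2.2.1 x hx
  obtain ⟨F, hF, hFeq⟩ := hg a ha
  have hmem : g x ∈ (a.inst g).args := List.mem_map.mpr ⟨x, hxa, rfl⟩
  rw [← hFeq] at hmem
  obtain ⟨v, hv, hveq⟩ := List.mem_map.mp hmem
  show ρ (h x) = g x
  rw [h1, ← hveq, hσρ v]

lemma mapInst_model {ρ σ : Term → Term} (hσρ : ∀ u, σ (ρ u) = u) {M : Inst} {T : List TGD}
    (hwf : ∀ t ∈ T, t.wf) (hM : IsModel M T) : IsModel (mapInst ρ M) T :=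
  fun t ht => satisfies_mapInst hσρ (hwf t ht) (hM t ht)

lemma iUnion_model_linear {ι : Type} [Nonempty ι] {Ms : ι → Inst} {T : List TGD}
    (hlin : ∀ t ∈ T, t.Linear) (hM : ∀ k, IsModel (Ms k) T) : IsModel (⋃ k, Ms k) T := by
  intro t ht g hg
  cases hbody : t.body with
  | nil =>
    obtain ⟨k⟩ := ‹Nonempty ι›
    obtain ⟨h, hh, hc⟩ := hM k t ht g (by rw [hbody]; simp)
    exact ⟨h, fun a ha => Set.mem_iUnion.mpr ⟨k, hh a ha⟩, hc⟩
  | cons a l =>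
    have hlnil : l = [] := by
      have := hlin t ht
      rw [TGD.Linear, hbody] at this
      simpa using this
    subst hlnil
    have hmem := hg a (by rw [hbody]; exact List.mem_cons_self)
    obtain ⟨k, hk⟩ := Set.mem_iUnion.mp hmem
    have hbk : ∀ b ∈ t.body, b.inst g ∈ Ms k := by
      intro b hb
      rw [hbody] at hb
      rw [List.mem_singleton.mp hb]
      exact hk
    obtain ⟨h, hh, hc⟩ := hM k t ht g hbk
    exact ⟨h, fun a' ha' => Set.mem_iUnion.mpr ⟨k, hh a' ha'⟩, hc⟩

end AuxChase

/-- Lemma 13: a set of linear TGDs is `ΣD,ΣQ`-trivial iff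
`chase_T(D) →_{ΣQ} D` for all singleton `ΣD`-databases `D`. -/
theorem linear_trivial_iff_singletons (T : List TGD) (SD SQ : Schema)
    (hT : ∀ t ∈ T, t.wf ∧ t.Linear) :
    HomTrivial T SD SQ ↔
      ∀ D : Inst, IsDatabase D SD → D.Subsingleton → HomTo SQ (chase T D) D := by
  constructor
  · intro h D hDdb _
    exact h D hDdb
  · intro hsing D hDdb
    classical
    by_cases hne : D.Nonempty
    swap
    · exact hsing D hDdb (fun a ha b hb => absurd ⟨a, ha⟩ hne)
    -- enumerate the facts of D
    set L : List Fct := hDdb.1.1.toFinset.toList with hL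
    have hmemL : ∀ F, F ∈ L ↔ F ∈ D := by
      intro F
      rw [hL, Finset.mem_toList, Set.Finite.mem_toFinset]
    have hLpos : 0 < L.length := by
      obtain ⟨F, hF⟩ := hne
      have : F ∈ L := (hmemL F).mpr hF
      exact List.length_pos_of_mem this
    have : Nonempty (Fin L.length) := ⟨⟨0, hLpos⟩⟩
    -- renaming functions
    set ρ : Fin L.length → Term → Term := fun k u => match u with
      | .const n => .const n
      | .null n => .null (Nat.pair k.1 n) with hρ
    set σ : Term → Term := fun u => match u with
      | .const n => .const n
      | .null m => .null (Nat.unpair m).2 with hσ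
    have hσρ : ∀ k u, σ (ρ k u) = u := by
      intro k u
      cases u with
      | const n => rfl
      | null n => show Term.null (Nat.unpair (Nat.pair k.1 n)).2 = Term.null n
                  rw [Nat.unpair_pair]
    -- singleton databases and their homomorphisms
    have hsingdb : ∀ k : Fin L.length, IsDatabase {L.get k} SD := by
      intro k
      have hmem : L.get k ∈ D := (hmemL _).mp (List.get_mem L k)
      refine ⟨⟨Set.finite_singleton _, ?_⟩, ?_⟩
      · intro F hF
        rw [Set.mem_singleton_iff] at hF
        subst hF
        exact hDdb.1.2 _ hmem
      · intro F hF
        rw [Set.mem_singleton_iff] at hF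
        subst hF
        exact hDdb.2 _ hmem
    have hhoms : ∀ k : Fin L.length, HomTo SQ (chase T {L.get k}) {L.get k} :=
      fun k => hsing {L.get k} (hsingdb k) Set.subsingleton_singleton
    choose hfun hdbp hhom using hhoms
    -- the model U
    set U : Inst := ⋃ k : Fin L.length, mapInst (ρ k) (chase T {L.get k}) with hU
    have hUmodel : IsModel U T := by
      refine iUnion_model_linear (fun t ht => (hT t ht).2) ?_
      intro k
      refine mapInst_model (hσρ k) (fun t ht => (hT t ht).1) ?_
      exact chaseResult_model
        (chase_isResult (chase_result_exists T (Set.finite_singleton (L.get k))))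
    have hDU : D ⊆ U := by
      intro F hF
      obtain ⟨k, hk⟩ := List.mem_iff_get.mp ((hmemL F).mpr hF)
      apply Set.mem_iUnion.mpr
      refine ⟨k, F, ?_, ?_⟩
      · exact subset_chase T {L.get k} (by rw [hk]; exact rfl)
      · -- F.map (ρ k) = F since all args are constants
        have hconst := (hDdb.1.2 F hF).2
        show Fct.map (ρ k) F = F
        cases F with
        | mk rel args =>
          simp only [Fct.map, Fct.mk.injEq, true_and]
          rw [show args.map (ρ k) = args.map id from
            List.map_congr_left ?_, List.map_id]
          intro u hu
          have := hconst u hu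
          cases u with
          | const n => rfl
          | null n => exact absurd this (by simp [Term.isConst])
    -- universal homomorphism from the chase of D into U
    obtain ⟨fch, hfseq, -, hcheq⟩ := chase_isResult (chase_result_exists T hDdb.1.1)
    obtain ⟨H, hHdb, hHhom⟩ :=
      chase_universal (fun t ht => (hT t ht).1) hfseq hDU hUmodel
    rw [← hcheq] at hHhom
    -- the combining map G
    set G : Term → Term := fun u => match u with
      | .const n => .const n
      | .null m => if h : (Nat.unpair m).1 < L.length then
          hfun ⟨(Nat.unpair m).1, h⟩ (.null (Nat.unpair m).2) else .null m with hG
    refine ⟨G ∘ H, ?_, ?_⟩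
    · intro n
      show G (H (Term.const n)) = Term.const n
      rw [hHdb n]
    · intro F hF hFrel
      have hFU : F.map H ∈ U := hHhom F hF
      obtain ⟨k, hFk⟩ := Set.mem_iUnion.mp hFU
      obtain ⟨F', hF', hFeq⟩ := hFk
      show F.map (G ∘ H) ∈ D
      rw [← Fct.map_map', ← hFeq, Fct.map_map']
      have hGρ : ∀ u, G (ρ k u) = hfun k u := by
        intro u
        cases u with
        | const n =>
          show G (Term.const n) = hfun k (Term.const n)
          rw [hdbp k n]
        | null n =>
          show G (Term.null (Nat.pair k.1 n)) = hfun k (Term.null n)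
          have h1 : (Nat.unpair (Nat.pair k.1 n)) = (k.1, n) := Nat.unpair_pair _ _
          simp only [hG, h1]
          rw [dif_pos k.isLt]
      have heqm : F'.map (G ∘ ρ k) = F'.map (hfun k) := by
        simp only [Fct.map, Fct.mk.injEq, true_and]
        exact List.map_congr_left (fun u _ => hGρ u)
      rw [heqm]
      have hrelF' : F'.rel ∈ SQ := by
        have h2 : F'.rel = F.rel := by
          rw [← Fct.map_rel F' (ρ k), hFeq, Fct.map_rel]
        rw [h2]
        exact hFrel
      have hmem := hhom k F' hF' hrelF'
      rw [Set.mem_singleton_iff] at hmem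
      rw [hmem]
      exact (hmemL _).mp (List.get_mem L k)
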